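/- Reflection identity: for all integers n and k, ⌊n choose k⌉ = (-1)^(n+k+[n<0]+[k<0])·⌊-k-1 choose -n-1⌉, where [P] denotes 1 if the condition P holds and 0 otherwise (Iverson bracket). -/

import Mathlib

/-- Roman factorial of an integer, as a rational number. -/
def romanFactorial (n : ℤ) : ℚ :=
  if 0 ≤ n then (n.toNat.factorial : ℚ)
  else (-1 : ℚ) ^ (n + 1) / ((-n - 1).toNat.factorial : ℚ)

/-- Roman coefficient of two integers. -/
def romanCoeff (n k : ℤ) : ℚ :=
  romanFactorial n / (romanFactorial k * romanFactorial (n - k))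

lemma romanFactorial_ne_zero (n : ℤ) : romanFactorial n ≠ 0 := by
  unfold romanFactorial
  split
  · exact_mod_cast Nat.factorial_ne_zero _
  · apply div_ne_zero
    · exact zpow_ne_zero _ (by norm_num)
    · exact_mod_cast Nat.factorial_ne_zero _

lemma romanFactorial_key (n : ℤ) :
    romanFactorial n * romanFactorial (-n - 1) =
      (-1 : ℚ) ^ (n + if n < 0 then 1 else 0) := by
  unfold romanFactorial
  rcases le_or_gt 0 n with h | h
  · rw [if_pos h, if_neg (by omega), if_neg (by omega : ¬ n < 0)]
    have e1 : -(-n - 1) - 1 = n := by ring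
    have e2 : -n - 1 + 1 = -n := by ring
    rw [e1, e2, zpow_neg, add_zero]
    have hf : ((n.toNat.factorial : ℚ)) ≠ 0 := by exact_mod_cast Nat.factorial_ne_zero _
    rw [mul_div_assoc']
    rw [mul_comm, mul_div_assoc, div_self hf, mul_one, ← inv_zpow]
    norm_num
  · rw [if_neg (by omega), if_pos (by omega : (0:ℤ) ≤ -n - 1), if_pos h]
    have hf : (((-n - 1).toNat.factorial : ℚ)) ≠ 0 := by exact_mod_cast Nat.factorial_ne_zero _
    field_simp

theorem romanCoeff_reflection (n k : ℤ) :
    romanCoeff n k =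
      (-1 : ℚ) ^ (n + k + (if n < 0 then 1 else 0) + (if k < 0 then 1 else 0)) *
        romanCoeff (-k - 1) (-n - 1) := by
  unfold romanCoeff
  have e : -k - 1 - (-n - 1) = n - k := by ring
  rw [e]
  have hn := romanFactorial_key n
  have hk := romanFactorial_key k
  have an := romanFactorial_ne_zero n
  have ak := romanFactorial_ne_zero k
  have ank := romanFactorial_ne_zero (n - k)
  have an' := romanFactorial_ne_zero (-n - 1)
  have ak' := romanFactorial_ne_zero (-k - 1)
  have hn' : romanFactorial (-n - 1) = (-1 : ℚ) ^ (n + if n < 0 then 1 else 0) / romanFactorial n := by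
    rw [eq_div_iff an, mul_comm]; exact hn
  have hk' : romanFactorial (-k - 1) = (-1 : ℚ) ^ (k + if k < 0 then 1 else 0) / romanFactorial k := by
    rw [eq_div_iff ak, mul_comm]; exact hk
  rw [hn', hk']
  field_simp
  have key : (-1:ℚ) ^ ((n + k + if n < 0 then (1:ℤ) else 0) + if k < 0 then (1:ℤ) else 0) *
      (-1) ^ (k + if k < 0 then (1:ℤ) else 0) = (-1) ^ (n + if n < 0 then (1:ℤ) else 0) := by
    rw [← zpow_add₀ (by norm_num : (-1:ℚ) ≠ 0),
      show ((n + k + if n < 0 then (1:ℤ) else 0) + if k < 0 then (1:ℤ) else 0) +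
        (k + if k < 0 then (1:ℤ) else 0) =
        (n + if n < 0 then (1:ℤ) else 0) + 2 * (k + if k < 0 then (1:ℤ) else 0) from by ring,
      zpow_add₀ (by norm_num : (-1:ℚ) ≠ 0), zpow_mul]
    norm_num
  linear_combination (-1) * key
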